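/- Let μ be a probability measure on ℝ with inverse distribution function G, and let p ∈ (0,1). Define Y₁(t) = G((1−p)t) and δ⁻_p(t) = G(1−pt) − G((1−p)t) for t ∈ (0,1). Then the pushforward, under the map (t,η) ↦ Y₁(t) + δ⁻_p(t)·η, of the product of Lebesgue measure on (0,1) with the Bernoulli measure (1−p)·δ₀ + p·δ₁ on {0,1}, equals μ. In particular, if t is uniformly distributed on (0,1) and η is an independent {0,1}-valued Bernoulli variable with P(η=1)=p, then Y₁(t) + δ⁻_p(t)·η has distribution μ. -/

import Mathlib

open MeasureTheory Set

/-- The inverse distribution function `G(t) = inf {u : μ((-∞,u]) ≥ t}`. -/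
noncomputable def invCDF (μ : Measure ℝ) (t : ℝ) : ℝ :=
  sInf {u : ℝ | t ≤ (μ (Iic u)).toReal}

/-- The Bernoulli measure on `{0,1} ⊆ ℝ` with `P({1}) = p`. -/
noncomputable def bernoulliMeasure (p : ℝ) : Measure ℝ :=
  ENNReal.ofReal (1 - p) • Measure.dirac (0:ℝ) + ENNReal.ofReal p • Measure.dirac (1:ℝ)

open ProbabilityTheory Filter

lemma invCDF_set_eq (μ : Measure ℝ) [IsProbabilityMeasure μ] (t : ℝ) :
    {u : ℝ | t ≤ (μ (Iic u)).toReal} = {u : ℝ | t ≤ cdf μ u} := by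
  ext u; simp [cdf_eq_real, measureReal_def]

lemma invCDF_le_iff (μ : Measure ℝ) [IsProbabilityMeasure μ] {t x : ℝ}
    (ht0 : 0 < t) (ht1 : t < 1) : invCDF μ t ≤ x ↔ t ≤ cdf μ x := by
  have hS : invCDF μ t = sInf {u : ℝ | t ≤ cdf μ u} := by
    rw [invCDF, invCDF_set_eq]
  have hne : {u : ℝ | t ≤ cdf μ u}.Nonempty := by
    obtain ⟨u, hu⟩ := ((tendsto_cdf_atTop μ).eventually (eventually_ge_nhds ht1)).exists
    exact ⟨u, hu⟩
  have hbdd : BddBelow {u : ℝ | t ≤ cdf μ u} := by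
    obtain ⟨u₀, hu₀⟩ := ((tendsto_cdf_atBot μ).eventually (eventually_lt_nhds ht0)).exists
    refine ⟨u₀, fun u hu => ?_⟩
    by_contra h
    push_neg at h
    exact absurd (le_trans hu (monotone_cdf μ h.le)) (not_le.mpr hu₀)
  constructor
  · intro h
    refine le_trans ?_ (monotone_cdf μ h)
    -- t ≤ cdf μ (invCDF μ t)
    have key : ∀ y ∈ Ioi (invCDF μ t), t ≤ cdf μ y := by
      intro y hy
      rw [hS] at hy
      obtain ⟨u, hu, huy⟩ := (csInf_lt_iff hbdd hne).mp hy
      exact le_trans hu (monotone_cdf μ huy.le)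
    have hrc : Filter.Tendsto (cdf μ) (nhdsWithin (invCDF μ t) (Ioi (invCDF μ t)))
        (nhds (cdf μ (invCDF μ t))) :=
      ((cdf μ).right_continuous (invCDF μ t)).mono_left
        (nhdsWithin_mono _ Ioi_subset_Ici_self)
    exact ge_of_tendsto hrc (eventually_nhdsWithin_of_forall key)
  · intro h
    rw [hS]
    exact csInf_le hbdd h

lemma invCDF_monotoneOn (μ : Measure ℝ) [IsProbabilityMeasure μ] :
    MonotoneOn (invCDF μ) (Ioo (0:ℝ) 1) := by
  intro t ht t' ht' htt'
  have h2 : t' ≤ cdf μ (invCDF μ t') :=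
    (invCDF_le_iff μ ht'.1 ht'.2).mp le_rfl
  exact (invCDF_le_iff μ ht.1 ht.2).mpr (le_trans htt' h2)

lemma bernoulli_isProbabilityMeasure {p : ℝ} (h0 : 0 ≤ p) (h1 : p ≤ 1) :
    IsProbabilityMeasure (_root_.bernoulliMeasure p) := by
  constructor
  rw [_root_.bernoulliMeasure]
  simp only [Measure.coe_add, Pi.add_apply, Measure.coe_smul, Pi.smul_apply,
    MeasureTheory.measure_univ, smul_eq_mul, mul_one]
  rw [← ENNReal.ofReal_add (by linarith) h0]
  norm_num

/-- Bernoulli decomposition via the "colliding Pac-Men" construction: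
if `t` is uniform on `(0,1)` and `η` is an independent Bernoulli(p) variable, then
`Y₁(t) + δ⁻_p(t) η` has distribution `μ`, where `Y₁(t) = G((1-p)t)` and
`δ⁻_p(t) = G(1-pt) - G((1-p)t)`. -/
theorem bernoulli_decomposition_minus (μ : Measure ℝ) [IsProbabilityMeasure μ]
    (p : ℝ) (hp : p ∈ Ioo (0:ℝ) 1) :
    Measure.map
      (fun q : ℝ × ℝ =>
        invCDF μ ((1 - p) * q.1) +
          (invCDF μ (1 - p * q.1) - invCDF μ ((1 - p) * q.1)) * q.2)
      ((volume.restrict (Ioo (0:ℝ) 1)).prod (_root_.bernoulliMeasure p)) = μ := by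
  obtain ⟨hp0, hp1⟩ := hp
  have h1p : (0:ℝ) < 1 - p := by linarith
  set ν : Measure ℝ := volume.restrict (Ioo (0:ℝ) 1) with hν
  set β : Measure ℝ := _root_.bernoulliMeasure p with hβ
  set f : ℝ × ℝ → ℝ := fun q =>
    invCDF μ ((1 - p) * q.1) +
      (invCDF μ (1 - p * q.1) - invCDF μ ((1 - p) * q.1)) * q.2 with hf_def
  haveI hνP : IsProbabilityMeasure ν := ⟨by simp [hν, Real.volume_Ioo]⟩
  haveI hβP : IsProbabilityMeasure β := bernoulli_isProbabilityMeasure hp0.le hp1.le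
  set m : Measure (ℝ × ℝ) := ν.prod β with hm
  -- membership of the arguments in (0,1)
  have harg1 : ∀ t ∈ Ioo (0:ℝ) 1, (1 - p) * t ∈ Ioo (0:ℝ) 1 := by
    intro t ht
    constructor
    · exact mul_pos h1p ht.1
    · nlinarith [ht.1, ht.2]
  have harg2 : ∀ t ∈ Ioo (0:ℝ) 1, 1 - p * t ∈ Ioo (0:ℝ) 1 := by
    intro t ht
    constructor <;> nlinarith [ht.1, ht.2]
  -- AEMeasurability of f
  have hmono : MonotoneOn (fun t => invCDF μ ((1 - p) * t)) (Ioo (0:ℝ) 1) := by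
    intro a ha b hb hab
    exact invCDF_monotoneOn μ (harg1 a ha) (harg1 b hb)
      (mul_le_mul_of_nonneg_left hab h1p.le)
  have hanti : AntitoneOn (fun t => invCDF μ (1 - p * t)) (Ioo (0:ℝ) 1) := by
    intro a ha b hb hab
    exact invCDF_monotoneOn μ (harg2 b hb) (harg2 a ha) (by nlinarith)
  have hAE1 : AEMeasurable (fun t => invCDF μ ((1 - p) * t)) ν :=
    aemeasurable_restrict_of_monotoneOn measurableSet_Ioo hmono
  have hAE2 : AEMeasurable (fun t => invCDF μ (1 - p * t)) ν :=
    aemeasurable_restrict_of_antitoneOn measurableSet_Ioo hanti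
  have hfst : Measure.map Prod.fst m = ν := by
    rw [hm, Measure.map_fst_prod]
    simp
  have hAE1' : AEMeasurable (fun q : ℝ × ℝ => invCDF μ ((1 - p) * q.1)) m := by
    rw [← hfst] at hAE1
    exact hAE1.comp_measurable measurable_fst
  have hAE2' : AEMeasurable (fun q : ℝ × ℝ => invCDF μ (1 - p * q.1)) m := by
    rw [← hfst] at hAE2
    exact hAE2.comp_measurable measurable_fst
  have hfAE : AEMeasurable f m :=
    hAE1'.add (((hAE2'.sub hAE1').mul measurable_snd.aemeasurable))
  -- both sides are probability measures; compare on Iic x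
  haveI : IsProbabilityMeasure (Measure.map f m) := Measure.isProbabilityMeasure_map hfAE
  refine Measure.ext_of_Iic (Measure.map f m) μ (fun x => ?_)
  rw [Measure.map_apply_of_aemeasurable hfAE measurableSet_Iic]
  set F : ℝ := cdf μ x with hF
  have hF0 : 0 ≤ F := cdf_nonneg μ x
  have hF1 : F ≤ 1 := cdf_le_one μ x
  set c : ℝ := F / (1 - p) with hc
  set d : ℝ := (1 - F) / p with hd
  have hd0 : 0 ≤ d := div_nonneg (by linarith) hp0.le
  set T₀ : Set ℝ := Ioo 0 1 ∩ Iic c with hT₀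
  set T₁ : Set ℝ := Ioo 0 1 ∩ Ici d with hT₁
  set strip : Set (ℝ × ℝ) := (Ioo (0:ℝ) 1) ×ˢ ({0, 1} : Set ℝ) with hstrip
  -- the complement of the strip is null
  have hstrip_null : m stripᶜ = 0 := by
    have hsub : stripᶜ ⊆ ((Ioo (0:ℝ) 1)ᶜ ×ˢ (univ : Set ℝ)) ∪
        ((univ : Set ℝ) ×ˢ ({0, 1} : Set ℝ)ᶜ) := by
      intro q hq
      rw [hstrip, mem_compl_iff, mem_prod] at hq
      push_neg at hq
      by_cases h : q.1 ∈ Ioo (0:ℝ) 1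
      · exact Or.inr ⟨trivial, hq h⟩
      · exact Or.inl ⟨h, trivial⟩
    refine measure_mono_null hsub ?_
    refine measure_union_null ?_ ?_
    · rw [hm, Measure.prod_prod]
      have : ν (Ioo (0:ℝ) 1)ᶜ = 0 := by
        rw [hν, Measure.restrict_apply (measurableSet_Ioo.compl)]
        simp
      rw [this, zero_mul]
    · rw [hm, Measure.prod_prod]
      have : β ({0, 1} : Set ℝ)ᶜ = 0 := by
        rw [hβ, _root_.bernoulliMeasure]
        simp only [Measure.coe_add, Pi.add_apply, Measure.coe_smul, Pi.smul_apply,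
          smul_eq_mul]
        rw [Measure.dirac_apply' _ (by measurability), Measure.dirac_apply' _ (by measurability)]
        simp
      rw [this, mul_zero]
  -- the preimage intersected with the strip
  have hpre : f ⁻¹' (Iic x) ∩ strip = (T₀ ×ˢ ({0} : Set ℝ)) ∪ (T₁ ×ˢ ({1} : Set ℝ)) := by
    ext q
    simp only [mem_inter_iff, mem_preimage, mem_Iic, hstrip, mem_prod, mem_insert_iff,
      mem_singleton_iff, mem_union, hT₀, hT₁, mem_inter_iff, mem_Ici]
    constructor
    · rintro ⟨hfq, hq1, (h0 | h1)⟩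
      · left
        refine ⟨⟨hq1, ?_⟩, h0⟩
        rw [hf_def] at hfq
        simp only [h0, mul_zero, add_zero] at hfq
        have := (invCDF_le_iff μ (harg1 q.1 hq1).1 (harg1 q.1 hq1).2).mp hfq
        rw [hc, le_div_iff₀ h1p]
        linarith [this]
      · right
        refine ⟨⟨hq1, ?_⟩, h1⟩
        rw [hf_def] at hfq
        simp only [h1, mul_one] at hfq
        have hfq' : invCDF μ (1 - p * q.1) ≤ x := by linarith
        have := (invCDF_le_iff μ (harg2 q.1 hq1).1 (harg2 q.1 hq1).2).mp hfq'
        rw [hd, div_le_iff₀ hp0]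
        linarith [this]
    · rintro (⟨⟨hq1, hqc⟩, h0⟩ | ⟨⟨hq1, hqd⟩, h1⟩)
      · refine ⟨?_, hq1, Or.inl h0⟩
        rw [hf_def]
        simp only [h0, mul_zero, add_zero]
        refine (invCDF_le_iff μ (harg1 q.1 hq1).1 (harg1 q.1 hq1).2).mpr ?_
        rw [hc, le_div_iff₀ h1p] at hqc
        rw [← hF]; linarith
      · refine ⟨?_, hq1, Or.inr h1⟩
        rw [hf_def]
        simp only [h1, mul_one]
        have : invCDF μ (1 - p * q.1) ≤ x := by
          refine (invCDF_le_iff μ (harg2 q.1 hq1).1 (harg2 q.1 hq1).2).mpr ?_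
          rw [hd, div_le_iff₀ hp0] at hqd
          rw [← hF]; linarith
        linarith
  -- measure of the preimage equals measure on the strip
  have hA : m (f ⁻¹' (Iic x)) = m (f ⁻¹' (Iic x) ∩ strip) := by
    refine le_antisymm ?_ (measure_mono inter_subset_left)
    calc m (f ⁻¹' (Iic x)) ≤ m ((f ⁻¹' (Iic x) ∩ strip) ∪ stripᶜ) := by
          refine measure_mono (fun q hq => ?_)
          by_cases h : q ∈ strip
          · exact Or.inl ⟨hq, h⟩
          · exact Or.inr h
      _ ≤ m (f ⁻¹' (Iic x) ∩ strip) + m stripᶜ := measure_union_le _ _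
      _ = m (f ⁻¹' (Iic x) ∩ strip) := by rw [hstrip_null, add_zero]
  -- volumes of T₀ and T₁
  have hνT₀ : ν T₀ = ENNReal.ofReal (min c 1) := by
    refine le_antisymm ?_ ?_
    · calc ν T₀ ≤ volume T₀ := by
            rw [hν, Measure.restrict_apply (measurableSet_Ioo.inter measurableSet_Iic)]
            exact measure_mono inter_subset_left
        _ ≤ volume (Icc (0:ℝ) (min c 1)) := by
            refine measure_mono (fun t ht => ?_)
            exact ⟨ht.1.1.le, le_min ht.2 ht.1.2.le⟩
        _ = ENNReal.ofReal (min c 1) := by rw [Real.volume_Icc, sub_zero]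
    · calc ENNReal.ofReal (min c 1) = volume (Ioo (0:ℝ) (min c 1)) := by
            rw [Real.volume_Ioo, sub_zero]
        _ ≤ ν T₀ := by
            rw [hν, Measure.restrict_apply (measurableSet_Ioo.inter measurableSet_Iic)]
            refine measure_mono (fun t ht => ?_)
            exact ⟨⟨⟨ht.1, lt_of_lt_of_le ht.2 (min_le_right _ _)⟩,
              le_of_lt (lt_of_lt_of_le ht.2 (min_le_left _ _))⟩,
              ⟨ht.1, lt_of_lt_of_le ht.2 (min_le_right _ _)⟩⟩
  have hνT₁ : ν T₁ = ENNReal.ofReal (1 - d) := by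
    refine le_antisymm ?_ ?_
    · calc ν T₁ ≤ volume T₁ := by
            rw [hν, Measure.restrict_apply (measurableSet_Ioo.inter measurableSet_Ici)]
            exact measure_mono inter_subset_left
        _ ≤ volume (Icc d 1) := by
            refine measure_mono (fun t ht => ?_)
            exact ⟨ht.2, ht.1.2.le⟩
        _ = ENNReal.ofReal (1 - d) := by rw [Real.volume_Icc]
    · calc ENNReal.ofReal (1 - d) = volume (Ioo d 1) := by rw [Real.volume_Ioo]
        _ ≤ ν T₁ := by
            rw [hν, Measure.restrict_apply (measurableSet_Ioo.inter measurableSet_Ici)]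
            refine measure_mono (fun t ht => ?_)
            exact ⟨⟨⟨lt_of_le_of_lt hd0 ht.1, ht.2⟩, ht.1.le⟩, ⟨lt_of_le_of_lt hd0 ht.1, ht.2⟩⟩
  -- Bernoulli singleton values
  have hβ0 : β ({0} : Set ℝ) = ENNReal.ofReal (1 - p) := by
    rw [hβ, _root_.bernoulliMeasure]
    simp only [Measure.coe_add, Pi.add_apply, Measure.coe_smul, Pi.smul_apply, smul_eq_mul]
    rw [Measure.dirac_apply' _ (measurableSet_singleton _),
      Measure.dirac_apply' _ (measurableSet_singleton _)]
    simp
  have hβ1 : β ({1} : Set ℝ) = ENNReal.ofReal p := by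
    rw [hβ, _root_.bernoulliMeasure]
    simp only [Measure.coe_add, Pi.add_apply, Measure.coe_smul, Pi.smul_apply, smul_eq_mul]
    rw [Measure.dirac_apply' _ (measurableSet_singleton _),
      Measure.dirac_apply' _ (measurableSet_singleton _)]
    simp
  -- final computation
  rw [hA, hpre]
  have hdisj : Disjoint (T₀ ×ˢ ({0} : Set ℝ)) (T₁ ×ˢ ({1} : Set ℝ)) := by
    rw [Set.disjoint_iff]
    rintro q ⟨⟨_, h0⟩, ⟨_, h1⟩⟩
    simp only [mem_singleton_iff] at h0 h1
    rw [h0] at h1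
    norm_num at h1
  have hmeas₁ : MeasurableSet (T₁ ×ˢ ({1} : Set ℝ)) :=
    (measurableSet_Ioo.inter measurableSet_Ici).prod (measurableSet_singleton _)
  rw [measure_union hdisj hmeas₁, hm, Measure.prod_prod, Measure.prod_prod,
    hνT₀, hνT₁, hβ0, hβ1]
  rw [← ofReal_cdf μ x, ← hF]
  by_cases hcase : F ≤ 1 - p
  · have hc1 : min c 1 = c := by
      refine min_eq_left ?_
      rw [hc, div_le_one h1p]; exact hcase
    have hd1 : 1 - d ≤ 0 := by
      rw [hd]
      have : 1 ≤ (1 - F) / p := by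
        rw [le_div_iff₀ hp0]; linarith
      linarith
    rw [hc1, ENNReal.ofReal_eq_zero.mpr hd1, zero_mul, add_zero,
      ← ENNReal.ofReal_mul (by positivity)]
    congr 1
    rw [hc]
    field_simp
  · push_neg at hcase
    have hc1 : min c 1 = 1 := by
      refine min_eq_right ?_
      rw [hc, le_div_iff₀ h1p]; linarith
    have hd1 : 0 ≤ 1 - d := by
      rw [hd]
      have : (1 - F) / p ≤ 1 := by
        rw [div_le_one hp0]; linarith
      linarith
    rw [hc1, ENNReal.ofReal_one, one_mul, ← ENNReal.ofReal_mul hd1,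
      ← ENNReal.ofReal_add (by linarith) (by positivity)]
    congr 1
    rw [hd]
    field_simp
    ring
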